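/- For all n ≥ k ≥ 1, the sum of q^{vls(w)} over all RGFs w of length n with maximum letter k equals S_q(n,k). -/

import Mathlib

open Finset

variable {n : ℕ}

/-- Positions of leftmost occurrences of letters in the word `w`. -/
def Lset (w : Fin n → ℕ) : Finset (Fin n) :=
  Finset.univ.filter fun i => ∀ j, j < i → w j ≠ w i

/-- Positions of rightmost occurrences of letters in the word `w`. -/
def Rset (w : Fin n → ℕ) : Finset (Fin n) :=
  Finset.univ.filter fun i => ∀ j, i < j → w j ≠ w i

/-- The maximum letter of the word `w`. -/
def bk (w : Fin n → ℕ) : ℕ := Finset.univ.sup w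

/-- The (1-indexed) position of the rightmost `1` in `w`. -/
def pro (w : Fin n → ℕ) : ℕ :=
  (Finset.univ.filter fun i => w i = 1).sup fun i => (i : ℕ) + 1

def lsi (w : Fin n → ℕ) (i : Fin n) : ℕ :=
  ((Lset w).filter fun j => j < i ∧ w j < w i).card

def rsi (w : Fin n → ℕ) (i : Fin n) : ℕ :=
  ((Rset w).filter fun j => i < j ∧ w j < w i).card

def vlsi (w : Fin n → ℕ) (i : Fin n) : ℕ :=
  if i ∉ Rset w ∧ pro w < (i : ℕ) + 1 then lsi w i - 1
  else if i ∈ Rset w ∧ (i : ℕ) + 1 < pro w then lsi w i + 1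
  else lsi w i

def vrsi (w : Fin n → ℕ) (i : Fin n) : ℕ :=
  if i ∉ Rset w ∧ pro w < (i : ℕ) + 1 then rsi w i + 1
  else if i ∈ Rset w ∧ (i : ℕ) + 1 < pro w then rsi w i - 1
  else rsi w i

def ls (w : Fin n → ℕ) : ℕ := ∑ i, lsi w i
def rs (w : Fin n → ℕ) : ℕ := ∑ i, rsi w i
def vls (w : Fin n → ℕ) : ℕ := ∑ i, vlsi w i
def vrs (w : Fin n → ℕ) : ℕ := ∑ i, vrsi w i

/-- `w` is a restricted growth function: positive letters, `w₁ = 1`, and each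
letter is at most one more than the maximum of the preceding letters. -/
def IsRGF (w : Fin n → ℕ) : Prop :=
  (∀ i, 1 ≤ w i) ∧ (∀ i : Fin n, (i : ℕ) = 0 → w i = 1) ∧
    ∀ i : Fin n, 0 < (i : ℕ) → w i ≤ (Finset.univ.filter fun j => j < i).sup w + 1

/-- The ascent set of `w`. -/
def AscSet (w : Fin n → ℕ) : Finset (Fin n) :=
  Finset.univ.filter fun i => ∃ j : Fin n, (j : ℕ) = (i : ℕ) + 1 ∧ w i < w j

open Polynomial in
/-- The q-integer [k]_q. -/
noncomputable def qint (k : ℕ) : Polynomial ℚ := ∑ i ∈ Finset.range k, X ^ i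

open Polynomial in
/-- The q-Stirling number S_q(n,k). -/
noncomputable def Sq : ℕ → ℕ → Polynomial ℚ
  | 0, 0 => 1
  | 0, _ + 1 => 0
  | _ + 1, 0 => 0
  | n + 1, k + 1 => X ^ k * Sq n k + qint (k + 1) * Sq n (k + 1)


namespace Stmt8Aux

open Polynomial

/-- max letter of a list (0 if empty). -/
def maxL (l : List ℕ) : ℕ := (Finset.range l.length).sup fun i => l.getD i 0

/-- sum of (letter - 1). -/
def lsSum (l : List ℕ) : ℕ := (l.map (· - 1)).sum

/-- 1-indexed position of rightmost 1. -/
def proL (l : List ℕ) : ℕ :=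
  ((Finset.range l.length).filter fun i => l.getD i 0 = 1).sup (· + 1)

def Good (l : List ℕ) : Prop :=
  ∀ i, (h : i < l.length) → 1 ≤ l.getD i 0 ∧ l.getD i 0 ≤ maxL (l.take i) + 1

lemma getD_append_lt (l : List ℕ) (a : ℕ) {i : ℕ} (h : i < l.length) :
    (l ++ [a]).getD i 0 = l.getD i 0 := by
  rw [List.getD_eq_getElem?_getD, List.getD_eq_getElem?_getD,
    List.getElem?_append_left h]

lemma getD_append_self (l : List ℕ) (a : ℕ) :
    (l ++ [a]).getD l.length 0 = a := by
  rw [List.getD_eq_getElem?_getD]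
  simp

lemma maxL_append (l : List ℕ) (a : ℕ) : maxL (l ++ [a]) = max (maxL l) a := by
  unfold maxL
  rw [List.length_append, List.length_singleton, Finset.range_add_one, Finset.sup_insert]
  rw [getD_append_self]
  rw [max_comm]
  congr 1
  apply Finset.sup_congr rfl
  intro i hi
  exact getD_append_lt l a (Finset.mem_range.mp hi)

lemma le_maxL {l : List ℕ} {x : ℕ} (h : x ∈ l) : x ≤ maxL l := by
  obtain ⟨i, hi, rfl⟩ := List.mem_iff_getElem.mp h
  have h2 : l[i] = l.getD i 0 := by rw [List.getD_eq_getElem _ _ hi]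
  rw [h2]
  exact Finset.le_sup (f := fun i => l.getD i 0) (Finset.mem_range.mpr hi)

lemma lsSum_append (l : List ℕ) (a : ℕ) : lsSum (l ++ [a]) = lsSum l + (a - 1) := by
  unfold lsSum
  rw [List.map_append, List.sum_append]
  simp

lemma proL_append_one (l : List ℕ) : proL (l ++ [1]) = l.length + 1 := by
  unfold proL
  rw [List.length_append, List.length_singleton, Finset.range_add_one, Finset.filter_insert]
  rw [if_pos (getD_append_self l 1)]
  rw [Finset.sup_insert]
  apply le_antisymm
  · apply sup_le (le_refl _)
    apply Finset.sup_le
    intro b hb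
    simp only [Finset.mem_filter, Finset.mem_range] at hb
    omega
  · exact le_sup_left

lemma proL_append_ne (l : List ℕ) {a : ℕ} (ha : a ≠ 1) : proL (l ++ [a]) = proL l := by
  unfold proL
  rw [List.length_append, List.length_singleton, Finset.range_add_one, Finset.filter_insert]
  rw [if_neg (by rw [getD_append_self]; exact ha)]
  congr 1
  apply Finset.filter_congr
  intro i hi
  rw [getD_append_lt l a (Finset.mem_range.mp hi)]

lemma maxL_take_le (l : List ℕ) (i : ℕ) : maxL (l.take i) ≤ maxL l := by
  unfold maxL
  apply Finset.sup_le
  intro j hj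
  simp only [Finset.mem_range, List.length_take] at hj
  have hj2 : j < l.length := lt_of_lt_of_le hj (min_le_right _ _)
  have : (l.take i).getD j 0 = l.getD j 0 := by
    rw [List.getD_eq_getElem _ _ (by simpa using hj), List.getD_eq_getElem _ _ hj2]
    exact List.getElem_take
  rw [this]
  exact Finset.le_sup (f := fun i => l.getD i 0) (Finset.mem_range.mpr hj2)

end Stmt8Aux

namespace Stmt8Aux
open Polynomial

def W : ℕ → ℕ → Finset (List ℕ)
  | 0, 0 => {[]}
  | 0, _ + 1 => ∅
  | _ + 1, 0 => ∅
  | n + 1, k + 1 =>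
      ((W n (k + 1)).biUnion fun l => (Finset.Icc 1 (k + 1)).image fun a => l ++ [a]) ∪
        (W n k).image fun l => l ++ [k + 1]

lemma take_append_le (l : List ℕ) (a : ℕ) {i : ℕ} (h : i ≤ l.length) :
    (l ++ [a]).take i = l.take i := by
  rw [List.take_append_of_le_length h]

lemma getD_le_maxL {l : List ℕ} {i : ℕ} (h : i < l.length) : l.getD i 0 ≤ maxL l :=
  Finset.le_sup (f := fun i => l.getD i 0) (Finset.mem_range.mpr h)

lemma good_append {l : List ℕ} {a : ℕ} (hg : Good l) (h1 : 1 ≤ a)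
    (h2 : a ≤ maxL l + 1) : Good (l ++ [a]) := by
  intro i hi
  rw [List.length_append, List.length_singleton] at hi
  rcases Nat.lt_or_ge i l.length with h | h
  · rw [getD_append_lt l a h, take_append_le l a (le_of_lt h)]
    exact hg i h
  · have hi' : i = l.length := by omega
    subst hi'
    rw [getD_append_self, take_append_le l a (le_refl _), List.take_length]
    exact ⟨h1, h2⟩

lemma good_prefix {l : List ℕ} {a : ℕ} (hg : Good (l ++ [a])) : Good l := by
  intro i hi
  have hi' : i < (l ++ [a]).length := by rw [List.length_append]; omega
  have := hg i hi'
  rwa [getD_append_lt l a hi, take_append_le l a (le_of_lt hi)] at this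

lemma mem_W {n k : ℕ} {l : List ℕ} :
    l ∈ W n k ↔ l.length = n ∧ maxL l = k ∧ Good l := by
  induction n generalizing k l with
  | zero =>
    match k with
    | 0 =>
      simp only [W, Finset.mem_singleton]
      constructor
      · rintro rfl
        exact ⟨rfl, rfl, fun i hi => by simp at hi⟩
      · rintro ⟨h, -, -⟩
        exact List.length_eq_zero_iff.mp h
    | k + 1 =>
      simp only [W, Finset.notMem_empty, false_iff]
      rintro ⟨hlen, hm, -⟩
      rw [List.length_eq_zero_iff.mp hlen] at hm
      simp only [maxL, List.length_nil, Finset.range_zero, Finset.sup_empty, Nat.bot_eq_zero] at hm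
      omega
  | succ n ih =>
    match k with
    | 0 =>
      simp only [W, Finset.notMem_empty, false_iff]
      rintro ⟨hlen, hm, hg⟩
      have h0 : 0 < l.length := by omega
      have h1 := (hg 0 h0).1
      have h2 := getD_le_maxL h0
      omega
    | k + 1 =>
      constructor
      · intro hmem
        rcases Finset.mem_union.mp hmem with h | h
        · obtain ⟨l', hl', hal⟩ := Finset.mem_biUnion.mp h
          obtain ⟨a, ha, rfl⟩ := Finset.mem_image.mp hal
          obtain ⟨hlen, hm, hg⟩ := ih.mp hl'
          simp only [Finset.mem_Icc] at ha
          refine ⟨by simp [hlen], ?_, good_append hg ha.1 (by omega)⟩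
          rw [maxL_append, hm]
          omega
        · obtain ⟨l', hl', rfl⟩ := Finset.mem_image.mp h
          obtain ⟨hlen, hm, hg⟩ := ih.mp hl'
          refine ⟨by simp [hlen], ?_, good_append hg (by omega) (by omega)⟩
          rw [maxL_append, hm]
          omega
      · rintro ⟨hlen, hm, hg⟩
        have hne : l ≠ [] := by intro h; rw [h] at hlen; simp at hlen
        obtain ⟨l', a, rfl⟩ : ∃ l' a, l = l' ++ [a] :=
          ⟨l.dropLast, l.getLast hne, (List.dropLast_concat_getLast hne).symm⟩
        have hlen' : l'.length = n := by
          rw [List.length_append, List.length_singleton] at hlen; omega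
        have hg' : Good l' := good_prefix hg
        have hga := hg l'.length (by simp)
        rw [getD_append_self, take_append_le l' a (le_refl _), List.take_length] at hga
        rw [maxL_append] at hm
        rcases Nat.lt_or_ge (maxL l') a with h | h
        · -- a = maxL l' + 1, new max
          have ha : a = maxL l' + 1 := by omega
          have hm' : maxL l' = k := by omega
          apply Finset.mem_union_right
          apply Finset.mem_image.mpr
          exact ⟨l', ih.mpr ⟨hlen', hm', hg'⟩, by rw [ha, hm']⟩
        · have hm' : maxL l' = k + 1 := by omega
          apply Finset.mem_union_left
          apply Finset.mem_biUnion.mpr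
          refine ⟨l', ih.mpr ⟨hlen', hm', hg'⟩, Finset.mem_image.mpr ⟨a, ?_, rfl⟩⟩
          rw [Finset.mem_Icc]
          omega

lemma length_of_mem_W {n k : ℕ} {l : List ℕ} (h : l ∈ W n k) : l.length = n :=
  (mem_W.mp h).1

lemma maxL_of_mem_W {n k : ℕ} {l : List ℕ} (h : l ∈ W n k) : maxL l = k :=
  (mem_W.mp h).2.1

end Stmt8Aux

namespace Stmt8Aux
open Polynomial

lemma qint_succ (k : ℕ) : qint (k + 1) = qint k + X ^ k := by
  unfold qint; rw [Finset.sum_range_succ]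

lemma Sq_succ_succ (n k : ℕ) :
    Sq (n + 1) (k + 1) = X ^ k * Sq n k + qint (k + 1) * Sq n (k + 1) := by
  rfl

lemma W_empty {n k : ℕ} (h : n < k) : W n k = ∅ := by
  induction n generalizing k with
  | zero =>
    match k, h with
    | k + 1, _ => rfl
  | succ n ih =>
    match k, h with
    | k + 1, h =>
      show (_ ∪ _) = ∅
      rw [ih (by omega), ih (by omega)]
      simp

lemma Sq_zero {n k : ℕ} (h : n < k) : Sq n k = 0 := by
  induction n generalizing k with
  | zero =>
    match k, h with
    | k + 1, _ => rfl
  | succ n ih =>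
    match k, h with
    | k + 1, h =>
      rw [Sq_succ_succ, ih (by omega), ih (by omega)]
      simp

lemma sum_W_succ (f : List ℕ → Polynomial ℚ) (n k : ℕ) :
    ∑ l ∈ W (n + 1) (k + 1), f l =
      (∑ l ∈ W n (k + 1), ∑ a ∈ Finset.Icc 1 (k + 1), f (l ++ [a])) +
        ∑ l ∈ W n k, f (l ++ [k + 1]) := by
  show ∑ l ∈ (_ ∪ _), f l = _
  rw [Finset.sum_union]
  · congr 1
    · rw [Finset.sum_biUnion]
      · apply Finset.sum_congr rfl
        intro l _
        rw [Finset.sum_image]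
        intro a _ b _ hab
        have := List.append_inj hab rfl
        simpa using this.2
      · intro l₁ h₁ l₂ h₂ hne
        apply Finset.disjoint_left.mpr
        intro x hx₁ hx₂
        simp only [Finset.coe_image, Set.mem_image, Finset.mem_coe] at hx₁ hx₂
        obtain ⟨a, -, rfl⟩ := Finset.mem_image.mp hx₁
        obtain ⟨b, -, hb⟩ := Finset.mem_image.mp hx₂
        simp only [Finset.mem_coe] at h₁ h₂
        have hlen : l₂.length = l₁.length := by
          rw [length_of_mem_W h₁, length_of_mem_W h₂]
        exact hne ((List.append_inj hb.symm hlen.symm).1.symm ▸ rfl)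
    · rw [Finset.sum_image]
      intro l₁ h₁ l₂ h₂ h
      have hlen : l₁.length = l₂.length := by
        rw [length_of_mem_W h₁, length_of_mem_W h₂]
      exact (List.append_inj h hlen).1
  · apply Finset.disjoint_left.mpr
    intro x hx₁ hx₂
    obtain ⟨l₁, h₁, hal⟩ := Finset.mem_biUnion.mp hx₁
    obtain ⟨a, -, rfl⟩ := Finset.mem_image.mp hal
    obtain ⟨l₂, h₂, hb⟩ := Finset.mem_image.mp hx₂
    have hlen : l₂.length = l₁.length := by
      rw [length_of_mem_W h₁, length_of_mem_W h₂]
    have := (List.append_inj hb hlen).1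
    subst this
    have e1 := maxL_of_mem_W h₁
    have e2 := maxL_of_mem_W h₂
    omega

lemma sum_qint (k : ℕ) : ∑ a ∈ Finset.Icc 1 (k + 1), (X : Polynomial ℚ) ^ (a - 1) = qint (k + 1) := by
  induction k with
  | zero => simp [qint]
  | succ k ih =>
    rw [Finset.sum_Icc_succ_top (by omega), ih, qint_succ (k + 1)]
    simp

end Stmt8Aux

namespace Stmt8Aux
open Polynomial

lemma sum_qint2 (m : ℕ) :
    ∑ a ∈ Finset.Icc 2 (m + 1), (X : Polynomial ℚ) ^ (a - 1) = X * qint m := by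
  induction m with
  | zero => simp [qint]
  | succ m ih =>
    rw [Finset.sum_Icc_succ_top (by omega), ih, qint_succ]
    rw [show m + 1 + 1 - 1 = m + 1 from rfl]
    ring

lemma pow_eq_split {A B C : ℕ} (h : A = B + C) :
    (X : Polynomial ℚ) ^ A = X ^ B * X ^ C := by
  subst h; rw [pow_add]

lemma sumL (n k : ℕ) : ∑ l ∈ W n k, (X : Polynomial ℚ) ^ lsSum l = Sq n k := by
  induction n generalizing k with
  | zero =>
    match k with
    | 0 => show ∑ l ∈ {[]}, _ = _; simp [lsSum]; rfl
    | k + 1 => show ∑ l ∈ (∅ : Finset (List ℕ)), _ = _; simp; rfl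
  | succ n ih =>
    match k with
    | 0 => show ∑ l ∈ (∅ : Finset (List ℕ)), _ = _; simp; rfl
    | k + 1 =>
      rw [sum_W_succ]
      have h1 : ∀ l ∈ W n (k + 1),
          ∑ a ∈ Finset.Icc 1 (k + 1), (X : Polynomial ℚ) ^ lsSum (l ++ [a]) =
            X ^ lsSum l * qint (k + 1) := by
        intro l _
        simp only [lsSum_append, pow_add]
        rw [← Finset.mul_sum, sum_qint]
      rw [Finset.sum_congr rfl h1, ← Finset.sum_mul, ih]
      have h2 : ∀ l ∈ W n k,
          (X : Polynomial ℚ) ^ lsSum (l ++ [k + 1]) = X ^ lsSum l * X ^ k := by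
        intro l _
        rw [lsSum_append, pow_add, Nat.add_sub_cancel]
      rw [Finset.sum_congr rfl h2, ← Finset.sum_mul, ih, Sq_succ_succ]
      ring

lemma sumT (n k : ℕ) (hk : 1 ≤ k) :
    ∑ l ∈ W n k, (X : Polynomial ℚ) ^ (lsSum l + proL l) = X ^ (n + 1 - k) * Sq n k := by
  induction n generalizing k with
  | zero =>
    match k, hk with
    | k + 1, _ =>
      show ∑ l ∈ (∅ : Finset (List ℕ)), _ = _
      rw [show Sq 0 (k + 1) = 0 from rfl]
      simp
  | succ n ih =>
    rcases Nat.lt_or_ge (n + 1) k with hbig | hkn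
    · rw [W_empty hbig, Sq_zero hbig]
      simp
    · match k, hk with
      | 1, _ =>
        rw [sum_W_succ]
        have h1 : ∀ l ∈ W n 1,
            ∑ a ∈ Finset.Icc 1 1, (X : Polynomial ℚ) ^ (lsSum (l ++ [a]) + proL (l ++ [a])) =
              X ^ lsSum l * X ^ (n + 1) := by
          intro l hl
          rw [Finset.Icc_self, Finset.sum_singleton, lsSum_append, proL_append_one,
            length_of_mem_W hl]
          exact pow_eq_split (by omega)
        have h2 : ∀ l ∈ W n 0,
            (X : Polynomial ℚ) ^ (lsSum (l ++ [0 + 1]) + proL (l ++ [0 + 1])) =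
              X ^ lsSum l * X ^ (n + 1) := by
          intro l hl
          rw [lsSum_append, proL_append_one, length_of_mem_W hl]
          exact pow_eq_split (by omega)
        rw [Finset.sum_congr rfl h1, Finset.sum_congr rfl h2, ← Finset.sum_mul, ← Finset.sum_mul,
          sumL, sumL, Sq_succ_succ]
        have : qint 1 = 1 := by simp [qint]
        rw [this]
        rw [show n + 1 + 1 - 1 = n + 1 from rfl]
        ring
      | k + 2, _ =>
        -- k + 2 ≤ n + 1, so n = m + (k + 1)
        obtain ⟨m, rfl⟩ : ∃ m, n = m + (k + 1) := ⟨n - (k + 1), by omega⟩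
        rw [sum_W_succ]
        have hsplit : Finset.Icc 1 (k + 2) = insert 1 (Finset.Icc 2 (k + 2)) := by
          ext x
          simp only [Finset.mem_Icc, Finset.mem_insert]
          omega
        have h1 : ∀ l ∈ W (m + (k + 1)) (k + 2),
            ∑ a ∈ Finset.Icc 1 (k + 2),
                (X : Polynomial ℚ) ^ (lsSum (l ++ [a]) + proL (l ++ [a])) =
              X ^ lsSum l * X ^ (m + (k + 1) + 1) +
                X ^ (lsSum l + proL l) * (X * qint (k + 1)) := by
          intro l hl
          rw [hsplit, Finset.sum_insert (by simp)]
          congr 1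
          · rw [lsSum_append, proL_append_one, length_of_mem_W hl]
            exact pow_eq_split (by omega)
          · rw [← sum_qint2 (k + 1), Finset.mul_sum]
            apply Finset.sum_congr rfl
            intro a ha
            simp only [Finset.mem_Icc] at ha
            rw [lsSum_append, proL_append_ne l (by omega)]
            exact pow_eq_split (by omega)
        have h2 : ∀ l ∈ W (m + (k + 1)) (k + 1),
            (X : Polynomial ℚ) ^ (lsSum (l ++ [k + 1 + 1]) + proL (l ++ [k + 1 + 1])) =
              X ^ (lsSum l + proL l) * X ^ (k + 1) := by
          intro l _
          rw [lsSum_append, proL_append_ne l (by omega)]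
          exact pow_eq_split (by omega)
        rw [Finset.sum_congr rfl h1, Finset.sum_congr rfl h2, Finset.sum_add_distrib,
          ← Finset.sum_mul, ← Finset.sum_mul, ← Finset.sum_mul, sumL,
          ih (k + 2) (by omega), ih (k + 1) (by omega), Sq_succ_succ]
        rw [show m + (k + 1) + 1 - (k + 2) = m from by omega,
          show m + (k + 1) + 1 - (k + 1) = m + 1 from by omega,
          show m + (k + 1) + 1 + 1 - (k + 2) = m + 1 from by omega,
          qint_succ (k + 1)]
        ring

end Stmt8Aux

namespace Stmt8Aux
open Polynomial

lemma filter_val_image {n : ℕ} (P : ℕ → Prop) [DecidablePred P] :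
    (Finset.range n).filter P =
      ((Finset.univ : Finset (Fin n)).filter fun i => P i.val).image Fin.val := by
  ext x
  simp only [Finset.mem_filter, Finset.mem_range, Finset.mem_image, Finset.mem_univ, true_and]
  constructor
  · rintro ⟨hx, hP⟩
    exact ⟨⟨x, hx⟩, hP, rfl⟩
  · rintro ⟨i, hP, rfl⟩
    exact ⟨i.isLt, hP⟩

lemma sup_val_bridge {n : ℕ} (P : ℕ → Prop) [DecidablePred P] (g : ℕ → ℕ) :
    ((Finset.range n).filter P).sup g =
      ((Finset.univ : Finset (Fin n)).filter fun i => P i.val).sup fun i => g i.val := by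
  rw [filter_val_image, Finset.sup_image]
  rfl

lemma card_val_bridge {n : ℕ} (P : ℕ → Prop) [DecidablePred P] :
    ((Finset.range n).filter P).card =
      ((Finset.univ : Finset (Fin n)).filter fun i => P i.val).card := by
  rw [filter_val_image, Finset.card_image_of_injective _ Fin.val_injective]

lemma range_eq_image (n : ℕ) :
    Finset.range n = (Finset.univ : Finset (Fin n)).image Fin.val := by
  have := filter_val_image (n := n) (fun _ => True)
  simpa using this

lemma getD_ofFn {n : ℕ} (w : Fin n → ℕ) {i : ℕ} (h : i < n) :
    (List.ofFn w).getD i 0 = w ⟨i, h⟩ := by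
  rw [List.getD_eq_getElem _ _ (by simpa using h)]
  simp

lemma maxL_ofFn {n : ℕ} (w : Fin n → ℕ) : maxL (List.ofFn w) = bk w := by
  unfold maxL bk
  rw [List.length_ofFn, range_eq_image, Finset.sup_image]
  apply Finset.sup_congr rfl
  intro i _
  show (List.ofFn w).getD i.val 0 = w i
  rw [getD_ofFn w i.isLt]

lemma getD_take (l : List ℕ) (m i : ℕ) (h1 : i < m) (h2 : i < l.length) :
    (l.take m).getD i 0 = l.getD i 0 := by
  rw [List.getD_eq_getElem _ _ (by simp; omega), List.getD_eq_getElem _ _ h2]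
  exact List.getElem_take

lemma maxL_take_ofFn {n : ℕ} (w : Fin n → ℕ) (m : ℕ) :
    maxL ((List.ofFn w).take m) =
      ((Finset.univ : Finset (Fin n)).filter fun j => j.val < m).sup w := by
  unfold maxL
  rw [List.length_take, List.length_ofFn]
  have hr : Finset.range (min m n) = (Finset.range n).filter fun i => i < m := by
    ext x
    simp only [Finset.mem_range, Finset.mem_filter]
    omega
  rw [hr, sup_val_bridge]
  apply Finset.sup_congr rfl
  intro i hi
  simp only [Finset.mem_filter] at hi
  show ((List.ofFn w).take m).getD i.val 0 = w i
  rw [getD_take _ m _ hi.2 (by simp [i.isLt]), getD_ofFn w i.isLt]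

lemma proL_ofFn {n : ℕ} (w : Fin n → ℕ) : proL (List.ofFn w) = pro w := by
  unfold proL pro
  rw [List.length_ofFn, sup_val_bridge]
  congr 1
  apply Finset.filter_congr
  intro i _
  rw [getD_ofFn w i.isLt]

lemma lsSum_ofFn {n : ℕ} (w : Fin n → ℕ) : lsSum (List.ofFn w) = ∑ i, (w i - 1) := by
  unfold lsSum
  rw [List.map_ofFn, List.sum_ofFn]
  rfl

end Stmt8Aux

namespace Stmt8Aux
open Polynomial

variable {n : ℕ} {w : Fin n → ℕ}

lemma prefix_attain (hw : IsRGF w) :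
    ∀ (m : ℕ) (i : Fin n), i.val ≤ m → ∀ v, 1 ≤ v → v ≤ w i → ∃ j, j ≤ i ∧ w j = v := by
  intro m
  induction m with
  | zero =>
    intro i hi v hv1 hv2
    have h0 : (i : ℕ) = 0 := by omega
    have hwi : w i = 1 := hw.2.1 i h0
    rw [hwi] at hv2
    exact ⟨i, le_refl i, by omega⟩
  | succ m ihm =>
    intro i hi v hv1 hv2
    by_cases hv : v = w i
    · exact ⟨i, le_refl i, hv.symm⟩
    have hvlt : v < w i := lt_of_le_of_ne hv2 hv
    rcases Nat.eq_zero_or_pos i.val with h0 | hpos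
    · have hwi : w i = 1 := hw.2.1 i h0
      omega
    · have hle := hw.2.2 i hpos
      set s := Finset.univ.filter fun j => j < i with hs
      have hne : s.Nonempty := by
        refine ⟨⟨0, lt_of_le_of_lt (Nat.zero_le _) i.isLt⟩, ?_⟩
        simp only [hs, Finset.mem_filter, Finset.mem_univ, true_and]
        exact Fin.mk_lt_of_lt_val hpos
      obtain ⟨j0, hj0mem, hj0⟩ := Finset.exists_mem_eq_sup s hne w
      have hj0i : j0 < i := by
        simp only [hs, Finset.mem_filter] at hj0mem
        exact hj0mem.2
      have hvle : v ≤ w j0 := by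
        rw [← hj0]
        omega
      obtain ⟨j, hj, hwj⟩ := ihm j0 (by have := hj0i; omega) v hv1 hvle
      exact ⟨j, le_trans hj (le_of_lt hj0i), hwj⟩

lemma image_univ_eq (hw : IsRGF w) (hn : 0 < n) :
    Finset.univ.image w = Finset.Icc 1 (bk w) := by
  ext v
  simp only [Finset.mem_image, Finset.mem_univ, true_and, Finset.mem_Icc]
  constructor
  · rintro ⟨i, rfl⟩
    exact ⟨hw.1 i, Finset.le_sup (Finset.mem_univ i)⟩
  · rintro ⟨h1, h2⟩
    obtain ⟨i0, -, hsup⟩ := Finset.exists_mem_eq_sup Finset.univ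
      (⟨⟨0, hn⟩, Finset.mem_univ _⟩) w
    have : v ≤ w i0 := by rw [← hsup]; exact h2
    obtain ⟨j, -, hj⟩ := prefix_attain hw i0.val i0 (le_refl _) v h1 this
    exact ⟨j, hj⟩

lemma Rset_injOn : Set.InjOn w (Rset w) := by
  intro i hi j hj hij
  simp only [Rset, Finset.coe_filter, Set.mem_setOf_eq, Finset.mem_univ, true_and] at hi hj
  rcases lt_trichotomy i j with h | h | h
  · exact absurd hij.symm (hi j h)
  · exact h
  · exact absurd hij (hj i h)

lemma Rset_image (hw : IsRGF w) : (Rset w).image w = Finset.univ.image w := by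
  apply Finset.Subset.antisymm
  · exact Finset.image_subset_image (Finset.filter_subset _ _)
  · intro v hv
    obtain ⟨i, -, rfl⟩ := Finset.mem_image.mp hv
    set F := Finset.univ.filter fun j => w j = w i with hF
    have hFne : F.Nonempty := ⟨i, by simp [hF]⟩
    set M := F.max' hFne with hM
    have hMF : M ∈ F := F.max'_mem hFne
    have hwM : w M = w i := by
      simp only [hF, Finset.mem_filter] at hMF
      exact hMF.2
    apply Finset.mem_image.mpr
    refine ⟨M, ?_, hwM⟩
    simp only [Rset, Finset.mem_filter, Finset.mem_univ, true_and]
    intro j hj hwj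
    have : j ∈ F := by simp [hF, hwj, hwM]
    exact absurd (F.le_max' j this) (by omega)

lemma card_Rset (hw : IsRGF w) (hn : 0 < n) : (Rset w).card = bk w := by
  have h1 : ((Rset w).image w).card = (Rset w).card :=
    Finset.card_image_of_injOn Rset_injOn
  rw [← h1, Rset_image hw, image_univ_eq hw hn, Nat.card_Icc]
  omega

lemma lsi_eq (hw : IsRGF w) (i : Fin n) : lsi w i = w i - 1 := by
  unfold lsi
  have himg : ((Lset w).filter fun j => j < i ∧ w j < w i).image w = Finset.Ico 1 (w i) := by
    ext v
    simp only [Finset.mem_image, Finset.mem_Ico]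
    constructor
    · rintro ⟨j, hj, rfl⟩
      simp only [Lset, Finset.mem_filter, Finset.mem_univ, true_and] at hj
      exact ⟨hw.1 j, hj.2.2⟩
    · rintro ⟨h1, h2⟩
      obtain ⟨j, hji, hj⟩ := prefix_attain hw i.val i (le_refl _) v h1 (le_of_lt h2)
      set F := Finset.univ.filter fun j' => w j' = v with hF
      have hFne : F.Nonempty := ⟨j, by simp [hF, hj]⟩
      set m := F.min' hFne with hm
      have hmF : m ∈ F := F.min'_mem hFne
      have hwm : w m = v := by
        simp only [hF, Finset.mem_filter] at hmF
        exact hmF.2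
      have hmj : m ≤ j := F.min'_le j (by simp [hF, hj])
      have hmi : m < i := by
        rcases lt_or_eq_of_le (le_trans hmj hji) with h | h
        · exact h
        · exfalso; rw [h] at hwm; omega
      refine ⟨m, ?_, hwm⟩
      simp only [Lset, Finset.mem_filter, Finset.mem_univ, true_and]
      refine ⟨?_, hmi, by omega⟩
      intro j' hj' hwj'
      rw [hwm] at hwj'
      have : j' ∈ F := by simp [hF, hwj']
      exact absurd (F.min'_le j' this) (by omega)
  have hinj : Set.InjOn w ((Lset w).filter fun j => j < i ∧ w j < w i) := by
    intro a ha b hb hab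
    simp only [Finset.coe_filter, Set.mem_setOf_eq, Lset, Finset.mem_filter,
      Finset.mem_univ, true_and] at ha hb
    rcases lt_trichotomy a b with h | h | h
    · exact absurd hab (hb.1 a h)
    · exact h
    · exact absurd hab.symm (ha.1 b h)
  have := Finset.card_image_of_injOn hinj
  rw [himg] at this
  rw [← this, Nat.card_Ico]

lemma pro_le (hn : 0 < n) : pro w ≤ n := by
  unfold pro
  apply Finset.sup_le
  intro i _
  exact i.isLt

lemma pro_spec (i : Fin n) (h : w i = 1) : i.val + 1 ≤ pro w :=
  Finset.le_sup (f := fun i : Fin n => i.val + 1) (by simp [h])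

lemma pro_pos (hw : IsRGF w) (hn : 0 < n) : 1 ≤ pro w := by
  have := pro_spec (w := w) ⟨0, hn⟩ (hw.2.1 _ rfl)
  omega

lemma pro_attain (hw : IsRGF w) (hn : 0 < n) :
    ∃ i : Fin n, i.val + 1 = pro w ∧ w i = 1 ∧ i ∈ Rset w := by
  have hne : (Finset.univ.filter fun i : Fin n => w i = 1).Nonempty :=
    ⟨⟨0, hn⟩, by simp [hw.2.1 (⟨0, hn⟩ : Fin n) rfl]⟩
  obtain ⟨i, hmem, hsup⟩ := Finset.exists_mem_eq_sup _ hne (fun i : Fin n => i.val + 1)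
  simp only [Finset.mem_filter, Finset.mem_univ, true_and] at hmem
  refine ⟨i, hsup.symm, hmem, ?_⟩
  simp only [Rset, Finset.mem_filter, Finset.mem_univ, true_and]
  intro j hj hwj
  rw [hmem] at hwj
  have h1 := pro_spec j hwj
  have h2 : pro w = i.val + 1 := by unfold pro; exact hsup
  have h3 : (i : ℕ) < (j : ℕ) := hj
  omega

end Stmt8Aux

namespace Stmt8Aux
open Polynomial

variable {n : ℕ} {w : Fin n → ℕ}

lemma key_identity (hw : IsRGF w) (hn : 0 < n) :
    vls w + (n + 1) = (∑ i, (w i - 1)) + pro w + bk w := by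
  classical
  obtain ⟨i0, hi0p, hi0w, hi0R⟩ := pro_attain hw hn
  have hpt : ∀ i : Fin n,
      vlsi w i + 1 + (if (i : ℕ) + 1 = pro w then 1 else 0)
        = (w i - 1) + (if (i : ℕ) < pro w then 1 else 0)
            + (if i ∈ Rset w then 1 else 0) := by
    intro i
    have hls := lsi_eq hw i
    have hw1 := hw.1 i
    have hps := pro_spec (w := w) i
    have heq : (i : ℕ) + 1 = pro w → w i = 1 ∧ i ∈ Rset w := by
      intro h
      have hii : i = i0 := Fin.ext (by omega)
      rw [hii]; exact ⟨hi0w, hi0R⟩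
    unfold vlsi
    by_cases hR : i ∈ Rset w
    · simp only [hR, not_true_eq_false, false_and, if_false, if_true, and_true,
        true_and, ite_true, ite_false]
      by_cases hip : (i : ℕ) + 1 = pro w
      · have h1 := (heq hip).1
        split_ifs <;> omega
      · split_ifs <;> omega
    · have hip : (i : ℕ) + 1 ≠ pro w := fun h => hR (heq h).2
      simp only [hR, not_false_eq_true, true_and, false_and, if_false, if_true,
        and_true, ite_true, ite_false]
      by_cases hw1' : w i = 1
      · have := hps hw1'
        split_ifs <;> omega
      · split_ifs <;> omega
  have hsum := Finset.sum_congr rfl (fun i (_ : i ∈ Finset.univ) => hpt i)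
  rw [Finset.sum_add_distrib, Finset.sum_add_distrib, Finset.sum_add_distrib,
    Finset.sum_add_distrib] at hsum
  have hb1 : (∑ i : Fin n, if (i : ℕ) + 1 = pro w then 1 else 0)
      = (Finset.univ.filter fun i : Fin n => (i : ℕ) + 1 = pro w).card := by
    rw [Finset.card_filter]
  have hb2 : (∑ i : Fin n, if (i : ℕ) < pro w then 1 else 0)
      = (Finset.univ.filter fun i : Fin n => (i : ℕ) < pro w).card := by
    rw [Finset.card_filter]
  have hb3 : (∑ i : Fin n, if i ∈ Rset w then 1 else 0)
      = (Finset.univ.filter fun i : Fin n => i ∈ Rset w).card := by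
    rw [Finset.card_filter]
  have hc1 : (Finset.univ.filter fun i : Fin n => (i : ℕ) + 1 = pro w).card = 1 := by
    rw [← card_val_bridge (P := fun x => x + 1 = pro w)]
    have hp1 := pro_pos hw hn
    have hp2 := pro_le (w := w) hn
    have : (Finset.range n).filter (fun x => x + 1 = pro w) = {pro w - 1} := by
      ext x
      simp only [Finset.mem_filter, Finset.mem_range, Finset.mem_singleton]
      omega
    rw [this, Finset.card_singleton]
  have hc2 : (Finset.univ.filter fun i : Fin n => (i : ℕ) < pro w).card = pro w := by
    rw [← card_val_bridge (P := fun x => x < pro w)]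
    have hp2 := pro_le (w := w) hn
    have : (Finset.range n).filter (fun x => x < pro w) = Finset.range (pro w) := by
      ext x
      simp only [Finset.mem_filter, Finset.mem_range]
      omega
    rw [this, Finset.card_range]
  have hc3 : (Finset.univ.filter fun i : Fin n => i ∈ Rset w).card = bk w := by
    have : (Finset.univ.filter fun i : Fin n => i ∈ Rset w) = Rset w := by
      ext i
      simp [Finset.mem_filter]
    rw [this, card_Rset hw hn]
  have hones : (∑ _i : Fin n, (1 : ℕ)) = n := by simp
  rw [hb1, hc1, hb2, hc2, hb3, hc3, hones] at hsum
  have hvls : vls w = ∑ i, vlsi w i := rfl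
  omega

end Stmt8Aux

namespace Stmt8Aux
open Polynomial

variable {n : ℕ}

lemma good_ofFn_iff {v : Fin n → ℕ} : Good (List.ofFn v) ↔ IsRGF v := by
  have hmt : ∀ i : Fin n, maxL ((List.ofFn v).take i.val) =
      (Finset.univ.filter fun j => j < i).sup v := by
    intro i
    rw [maxL_take_ofFn]
    congr 1
  constructor
  · intro hg
    refine ⟨?_, ?_, ?_⟩
    · intro i
      have := hg i.val (by simpa using i.isLt)
      rw [getD_ofFn v i.isLt, Fin.eta] at this
      exact this.1
    · intro i hi
      have := hg i.val (by simpa using i.isLt)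
      rw [getD_ofFn v i.isLt, Fin.eta] at this
      have h0 : (List.ofFn v).take i.val = [] := by
        rw [hi]
        simp
      rw [h0] at this
      have : maxL ([] : List ℕ) = 0 := by simp [maxL]
      omega
    · intro i _
      have := hg i.val (by simpa using i.isLt)
      rw [getD_ofFn v i.isLt, Fin.eta, hmt i] at this
      exact this.2
  · intro hw
    intro i hi
    rw [List.length_ofFn] at hi
    rw [getD_ofFn v hi]
    set i' : Fin n := ⟨i, hi⟩
    refine ⟨hw.1 i', ?_⟩
    rw [show i = i'.val from rfl, hmt i']
    rcases Nat.eq_zero_or_pos i with h0 | hpos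
    · have := hw.2.1 i' h0
      omega
    · exact hw.2.2 i' hpos

lemma maxL_eq_zero : maxL ([] : List ℕ) = 0 := by simp [maxL]

end Stmt8Aux

open Polynomial Stmt8Aux


open scoped Classical in
/-- The sum of q^{vls(w)} over all RGFs of length n with maximum letter k is S_q(n,k). -/
theorem stmt8 (n k : ℕ) (hk : 1 ≤ k) (hn : k ≤ n) :
    ∑ w ∈ (Finset.univ : Finset (Fin n → Fin (n + 1))).filter
        (fun w => IsRGF (fun i => (w i : ℕ)) ∧ bk (fun i => (w i : ℕ)) = k),
      (Polynomial.X : Polynomial ℚ) ^ vls (fun i => (w i : ℕ)) = Sq n k := by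
  have hn0 : 0 < n := lt_of_lt_of_le hk hn
  set S := (Finset.univ : Finset (Fin n → Fin (n + 1))).filter
      (fun w => IsRGF (fun i => (w i : ℕ)) ∧ bk (fun i => (w i : ℕ)) = k) with hS
  have hmemS : ∀ w : Fin n → Fin (n + 1),
      w ∈ S ↔ List.ofFn (fun i => (w i : ℕ)) ∈ W n k := by
    intro w
    rw [hS, Finset.mem_filter, mem_W]
    constructor
    · rintro ⟨-, hrgf, hbk⟩
      exact ⟨by simp, by rw [maxL_ofFn]; exact hbk, good_ofFn_iff.mpr hrgf⟩
    · rintro ⟨-, hm, hg⟩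
      rw [maxL_ofFn] at hm
      exact ⟨Finset.mem_univ _, good_ofFn_iff.mp hg, hm⟩
  have htrans : ∑ w ∈ S,
        (X : Polynomial ℚ) ^ ((∑ i, ((w i : ℕ) - 1)) + pro (fun i => (w i : ℕ)))
      = ∑ l ∈ W n k, (X : Polynomial ℚ) ^ (lsSum l + proL l) := by
    refine Finset.sum_bij' (fun w _ => List.ofFn fun i => ((w i : ℕ)))
      (fun l hl => fun i : Fin n =>
        (⟨l.getD i.val 0, by
          have h1 := maxL_of_mem_W hl
          have h2 := length_of_mem_W hl
          have h3 := getD_le_maxL (l := l) (i := i.val) (by omega)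
          omega⟩ : Fin (n + 1)))
      (fun w hw => (hmemS w).mp hw)
      (fun l hl => ?_) (fun w hw => ?_) (fun l hl => ?_) (fun w hw => ?_)
    · rw [hmemS]
      have he : (List.ofFn fun i : Fin n => l.getD i.val 0) = l := by
        apply List.ext_getElem
        · simp [length_of_mem_W hl]
        · intro i h1 h2
          simp only [List.getElem_ofFn]
          rw [List.getD_eq_getElem _ _ h2]
      show (List.ofFn fun i : Fin n => l.getD i.val 0) ∈ W n k
      rw [he]
      exact hl
    · funext i
      apply Fin.ext
      show (List.ofFn fun i : Fin n => ((w i : ℕ))).getD i.val 0 = ((w i : ℕ))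
      rw [getD_ofFn _ i.isLt, Fin.eta]
    · apply List.ext_getElem
      · simp [length_of_mem_W hl]
      · intro i h1 h2
        simp only [List.getElem_ofFn]
        rw [List.getD_eq_getElem _ _ h2]
    · rw [lsSum_ofFn, proL_ofFn]
  have hmain : (X : Polynomial ℚ) ^ (n + 1 - k) *
        (∑ w ∈ S, (X : Polynomial ℚ) ^ vls (fun i => (w i : ℕ)))
      = X ^ (n + 1 - k) * Sq n k := by
    rw [Finset.mul_sum]
    have hcong : ∀ w ∈ S,
        (X : Polynomial ℚ) ^ (n + 1 - k) * X ^ vls (fun i => (w i : ℕ))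
          = X ^ ((∑ i, ((w i : ℕ) - 1)) + pro (fun i => (w i : ℕ))) := by
      intro w hw
      rw [← pow_add]
      congr 1
      have hwmem : IsRGF (fun i => ((w i : ℕ))) ∧ bk (fun i => ((w i : ℕ))) = k :=
        (Finset.mem_filter.mp hw).2
      have hkey := key_identity hwmem.1 hn0
      rw [hwmem.2] at hkey
      omega
    rw [Finset.sum_congr rfl hcong, htrans, sumT n k hk]
  exact mul_left_cancel₀ (pow_ne_zero _ Polynomial.X_ne_zero) hmain
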